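/- Let X be a set and F a nonempty family of subsets of X. The collection of subsets of X that are F-stable under ultrafilters is the collection of closed sets of a topology on X, in which every element of the Boolean algebra generated by F is clopen; moreover the closure of a subset Y in this topology is the union of the sets Y_F(U) over all ultrafilters U on Y. -/

import Mathlib

universe u

/-- The `F`-ultrafilter limit set of `Y ⊆ X` with respect to an ultrafilter `U` on `Y`:
`Y_F(U) := {x ∈ X : ∀ s ∈ F, x ∈ s ↔ s ∩ Y ∈ U}`. -/
def ultraLimitSet {X : Type u} (F : Set (Set X)) (Y : Set X) (U : Ultrafilter Y) : Set X :=
  {x : X | ∀ s ∈ F, (x ∈ s ↔ (Subtype.val ⁻¹' s : Set Y) ∈ U)}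

/-- `Y` is `F`-stable under ultrafilters if `Y_F(U) ⊆ Y` for every ultrafilter `U` on `Y`. -/
def IsUltraStable {X : Type u} (F : Set (Set X)) (Y : Set X) : Prop :=
  ∀ U : Ultrafilter Y, ultraLimitSet F Y U ⊆ Y

/-- Membership in the Boolean subalgebra of `Set X` generated by the family `F`. -/
inductive InBoolGen {X : Type u} (F : Set (Set X)) : Set X → Prop
  | base : ∀ s ∈ F, InBoolGen F s
  | compl : ∀ s : Set X, InBoolGen F s → InBoolGen F sᶜ
  | inter : ∀ s t : Set X, InBoolGen F s → InBoolGen F t → InBoolGen F (s ∩ t)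
  | union : ∀ s t : Set X, InBoolGen F s → InBoolGen F t → InBoolGen F (s ∪ t)

open Set Filter Topology

/-- The map sending a point to its `F`-type. -/
noncomputable def uphi {X : Type u} (F : Set (Set X)) (x : X) : F → Bool :=
  fun s => @decide (x ∈ (s : Set X)) (Classical.propDecidable _)

/-- The topology induced from the product of discrete `Bool` via `uphi`. -/
noncomputable def utop {X : Type u} (F : Set (Set X)) : TopologicalSpace X :=
  TopologicalSpace.induced (uphi F) inferInstance

/-- The limit `F`-type of an ultrafilter on `Y`. -/
noncomputable def ulim {X : Type u} (F : Set (Set X)) (Y : Set X) (U : Ultrafilter Y) :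
    F → Bool :=
  fun s => @decide ((Subtype.val ⁻¹' (s : Set X) : Set Y) ∈ U) (Classical.propDecidable _)

lemma ultraLimitSet_eq_preimage {X : Type u} (F : Set (Set X)) (Y : Set X) (U : Ultrafilter Y) :
    ultraLimitSet F Y U = uphi F ⁻¹' {ulim F Y U} := by
  ext x
  simp only [ultraLimitSet, mem_setOf_eq, mem_preimage, mem_singleton_iff, funext_iff,
    uphi, ulim, decide_eq_decide]
  exact ⟨fun h s => h s s.2, fun h s hs => h ⟨s, hs⟩⟩

lemma tendsto_uphi {X : Type u} (F : Set (Set X)) (Y : Set X) (U : Ultrafilter Y) :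
    Tendsto (fun y : Y => uphi F (y : X)) U (nhds (ulim F Y U)) := by
  rw [tendsto_pi_nhds]
  intro s
  rw [nhds_discrete, tendsto_pure]
  by_cases h : (Subtype.val ⁻¹' (s : Set X) : Set Y) ∈ U
  · filter_upwards [h] with y hy
    simp only [uphi, ulim, decide_eq_decide]
    exact ⟨fun _ => h, fun _ => hy⟩
  · have h' : (Subtype.val ⁻¹' (s : Set X) : Set Y)ᶜ ∈ U :=
      (Ultrafilter.compl_mem_iff_notMem).2 h
    filter_upwards [h'] with y hy
    simp only [uphi, ulim, decide_eq_decide]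
    exact ⟨fun hx => absurd hx hy, fun hx => absurd hx h⟩

lemma uphi_continuous {X : Type u} (F : Set (Set X)) :
    @Continuous X (F → Bool) (utop F) _ (uphi F) :=
  continuous_induced_dom

lemma base_isClopen {X : Type u} (F : Set (Set X)) {s : Set X} (hs : s ∈ F) :
    @IsClopen X (utop F) s := by
  letI t := utop F
  have h1 : IsClopen ((fun g : F → Bool => g ⟨s, hs⟩) ⁻¹' {true}) :=
    (isClopen_discrete {true}).preimage (continuous_apply _)
  have h2 : s = uphi F ⁻¹' ((fun g : F → Bool => g ⟨s, hs⟩) ⁻¹' {true}) := by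
    ext x
    simp [uphi]
  rw [h2]
  exact h1.preimage (uphi_continuous F)

lemma closure_eq_iUnion {X : Type u} (F : Set (Set X)) (Y : Set X) :
    @closure X (utop F) Y = ⋃ U : Ultrafilter Y, ultraLimitSet F Y U := by
  letI t := utop F
  ext x
  simp only [mem_iUnion]
  constructor
  · intro hx
    obtain ⟨V, hYV, hVx⟩ := mem_closure_iff_ultrafilter.1 hx
    have hrange : Set.range (Subtype.val : Y → X) ∈ V := by
      rwa [Subtype.range_val]
    refine ⟨V.comap Subtype.val_injective hrange, ?_⟩
    intro s hs
    rw [Ultrafilter.mem_comap]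
    have himg : (Subtype.val : Y → X) '' (Subtype.val ⁻¹' s) = s ∩ Y := by
      rw [Set.image_preimage_eq_inter_range, Subtype.range_val]
    rw [himg]
    have hclopen := base_isClopen F hs
    constructor
    · intro hxs
      have : s ∈ 𝓝 x := hclopen.2.mem_nhds hxs
      exact inter_mem (hVx this) hYV
    · intro hsY
      by_contra hxs
      have : sᶜ ∈ 𝓝 x := hclopen.1.isOpen_compl.mem_nhds hxs
      have hsc : sᶜ ∈ V := hVx this
      have : s ∈ V := V.toFilter.mem_of_superset hsY inter_subset_left
      exact (Ultrafilter.compl_mem_iff_notMem.1 hsc) this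
  · rintro ⟨U, hxU⟩
    rw [mem_closure_iff_ultrafilter]
    refine ⟨U.map Subtype.val, ?_, ?_⟩
    · rw [Ultrafilter.mem_map]
      exact univ_mem' (fun y => y.2)
    · have hphix : uphi F x = ulim F Y U := by
        have := (ultraLimitSet_eq_preimage F Y U) ▸ hxU
        simpa using this
      rw [Ultrafilter.coe_map]
      change _ ≤ @nhds X (TopologicalSpace.induced (uphi F) inferInstance) x
      rw [nhds_induced (uphi F) x, ← Filter.map_le_iff_le_comap, Filter.map_map]
      rw [hphix]
      exact tendsto_uphi F Y U
  
theorem ultraStable_sets_form_topology (X : Type u) (F : Set (Set X)) (hF : F.Nonempty) :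
    ∃ t : TopologicalSpace X,
      (∀ Y : Set X, @IsClosed X t Y ↔ IsUltraStable F Y) ∧
      (∀ s : Set X, InBoolGen F s → @IsClopen X t s) ∧
      (∀ Y : Set X, @closure X t Y = ⋃ U : Ultrafilter Y, ultraLimitSet F Y U) := by
  refine ⟨utop F, ?_, ?_, closure_eq_iUnion F⟩
  · intro Y
    letI t := utop F
    constructor
    · intro hY U
      have : ultraLimitSet F Y U ⊆ @closure X t Y := by
        rw [closure_eq_iUnion F Y]
        exact subset_iUnion (fun U => ultraLimitSet F Y U) U
      rwa [hY.closure_eq] at this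
    · intro hY
      have : @closure X t Y ⊆ Y := by
        rw [closure_eq_iUnion F Y]
        exact iUnion_subset hY
      exact isClosed_of_closure_subset this
  · letI t := utop F
    intro s hs
    induction hs with
    | base s hs => exact base_isClopen F hs
    | compl s _ ih => exact ih.compl
    | inter s t _ _ ih1 ih2 => exact ih1.inter ih2
    | union s t _ _ ih1 ih2 => exact ih1.union ih2
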